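/- arXiv:2002.10208 — 4 statements merged into one kernel-verified Lean document; each statement's English description precedes it below -/
import Mathlib

section
/- Let φ : [0,∞) → [0,∞) be an index function (continuous, strictly increasing, φ(0)=0) and let p > 0 be such that the function t ↦ t^p / φ(t) is nondecreasing on (0, κ²]. Suppose r_λ : [0,κ²] → ℝ is a family of functions satisfying sup_{t ∈ [0,κ²]} |r_λ(t)| ≤ γ and sup_{t ∈ [0,κ²]} |r_λ(t)| t^p ≤ γ_p λ^p for all λ ∈ (0, κ²]. Then sup_{t ∈ [0,κ²]} |r_λ(t)| φ(t) ≤ max(γ, γ_p) φ(λ) for all λ ∈ (0, κ²]. -/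
theorem stmt1 (κ : ℝ) (hκ : 0 < κ)
    (φ : ℝ → ℝ) (hφc : ContinuousOn φ (Set.Ici 0))
    (hφm : StrictMonoOn φ (Set.Ici 0)) (hφ0 : φ 0 = 0)
    (p : ℝ) (hp : 0 < p)
    (hcover : ∀ s t : ℝ, 0 < s → s ≤ t → t ≤ κ ^ 2 → s ^ p / φ s ≤ t ^ p / φ t)
    (r : ℝ → ℝ → ℝ) (γ γp : ℝ)
    (hγ : ∀ lam ∈ Set.Ioc (0 : ℝ) (κ ^ 2), ∀ t ∈ Set.Icc (0 : ℝ) (κ ^ 2), |r lam t| ≤ γ)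
    (hγp : ∀ lam ∈ Set.Ioc (0 : ℝ) (κ ^ 2), ∀ t ∈ Set.Icc (0 : ℝ) (κ ^ 2),
      |r lam t| * t ^ p ≤ γp * lam ^ p) :
    ∀ lam ∈ Set.Ioc (0 : ℝ) (κ ^ 2), ∀ t ∈ Set.Icc (0 : ℝ) (κ ^ 2),
      |r lam t| * φ t ≤ max γ γp * φ lam := by
  intro lam hlam t ht
  obtain ⟨hlam0, hlamκ⟩ := hlam
  obtain ⟨ht0, htκ⟩ := ht
  have hφlam : 0 < φ lam := by
    have := hφm (Set.self_mem_Ici) (Set.mem_Ici.mpr hlam0.le) hlam0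
    simpa [hφ0] using this
  have hφpos : ∀ s : ℝ, 0 ≤ s → 0 ≤ φ s := by
    intro s hs
    rcases eq_or_lt_of_le hs with h | h
    · simp [← h, hφ0]
    · have := hφm (Set.self_mem_Ici) (Set.mem_Ici.mpr hs) h
      simpa [hφ0] using this.le
  rcases le_or_gt t lam with hcase | hcase
  · -- t ≤ lam : use γ bound
    have hφt : φ t ≤ φ lam := by
      rcases eq_or_lt_of_le hcase with h | h
      · simp [h]
      · exact (hφm (Set.mem_Ici.mpr ht0) (Set.mem_Ici.mpr hlam0.le) h).le
    calc |r lam t| * φ t ≤ γ * φ lam := by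
          apply mul_le_mul (hγ lam ⟨hlam0, hlamκ⟩ t ⟨ht0, htκ⟩) hφt (hφpos t ht0)
          exact le_trans (abs_nonneg _) (hγ lam ⟨hlam0, hlamκ⟩ t ⟨ht0, htκ⟩)
      _ ≤ max γ γp * φ lam := by
          apply mul_le_mul_of_nonneg_right (le_max_left _ _) hφlam.le
  · -- lam < t
    have ht0' : 0 < t := hlam0.trans hcase
    have hφt : 0 < φ t := by
      have := hφm (Set.self_mem_Ici) (Set.mem_Ici.mpr ht0'.le) ht0'
      simpa [hφ0] using this
    have hcov := hcover lam t hlam0 hcase.le htκ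
    -- φ t ≤ t^p * φ lam / lam^p
    have hlp : 0 < lam ^ p := Real.rpow_pos_of_pos hlam0 p
    have htp : 0 < t ^ p := Real.rpow_pos_of_pos ht0' p
    have hφt' : φ t * lam ^ p ≤ t ^ p * φ lam := by
      rw [div_le_div_iff₀ hφlam hφt] at hcov
      linarith
    have hbound := hγp lam ⟨hlam0, hlamκ⟩ t ⟨ht0, htκ⟩
    have key : |r lam t| * φ t * lam ^ p ≤ γp * φ lam * lam ^ p := by
      calc |r lam t| * φ t * lam ^ p = |r lam t| * (φ t * lam ^ p) := by ring
        _ ≤ |r lam t| * (t ^ p * φ lam) :=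
            mul_le_mul_of_nonneg_left hφt' (abs_nonneg _)
        _ = |r lam t| * t ^ p * φ lam := by ring
        _ ≤ γp * lam ^ p * φ lam :=
            mul_le_mul_of_nonneg_right hbound hφlam.le
        _ = γp * φ lam * lam ^ p := by ring
    have : |r lam t| * φ t ≤ γp * φ lam := le_of_mul_le_mul_right key hlp
    calc |r lam t| * φ t ≤ γp * φ lam := this
      _ ≤ max γ γp * φ lam :=
          mul_le_mul_of_nonneg_right (le_max_right _ _) hφlam.le
end

section
/- Let φ be a nondecreasing index function covered by the qualification p ≥ 1 of a regularization scheme with residual functions r_λ (so sup_t |r_λ(t)| ≤ γ, sup_t |r_λ(t)| t^p ≤ γ_p λ^p, and sup_t |r_λ(t)| φ(t) ≤ c_p φ(λ) with c_p = max(γ, γ_p)). Then for all λ ∈ (0, κ²], sup_{σ ∈ [0,κ²]} |r_λ(σ)| φ(λ + σ) ≤ 2^p c_p φ(λ). -/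
theorem stmt2 (κ : ℝ) (hκ : 0 < κ)
    (φ : ℝ → ℝ) (hφc : ContinuousOn φ (Set.Ici 0))
    (hφm : StrictMonoOn φ (Set.Ici 0)) (hφ0 : φ 0 = 0)
    (p : ℝ) (hp : 1 ≤ p)
    (hcover : ∀ s t : ℝ, 0 < s → s ≤ t → s ^ p / φ s ≤ t ^ p / φ t)
    (r : ℝ → ℝ → ℝ) (γ γp cp : ℝ) (hcp : cp = max γ γp)
    (hγ : ∀ lam ∈ Set.Ioc (0 : ℝ) (κ ^ 2), ∀ t ∈ Set.Icc (0 : ℝ) (κ ^ 2), |r lam t| ≤ γ)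
    (hγp : ∀ lam ∈ Set.Ioc (0 : ℝ) (κ ^ 2), ∀ t ∈ Set.Icc (0 : ℝ) (κ ^ 2),
      |r lam t| * t ^ p ≤ γp * lam ^ p)
    (hqual : ∀ lam ∈ Set.Ioc (0 : ℝ) (κ ^ 2), ∀ t ∈ Set.Icc (0 : ℝ) (κ ^ 2),
      |r lam t| * φ t ≤ cp * φ lam) :
    ∀ lam ∈ Set.Ioc (0 : ℝ) (κ ^ 2), ∀ sg ∈ Set.Icc (0 : ℝ) (κ ^ 2),
      |r lam sg| * φ (lam + sg) ≤ 2 ^ p * cp * φ lam := by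
  intro lam hlam sg hsg
  have hφpos : ∀ x : ℝ, 0 < x → 0 < φ x := by
    intro x hx
    have := hφm (Set.self_mem_Ici) (Set.mem_Ici.mpr hx.le) hx
    simpa [hφ0] using this
  have h2p : (0:ℝ) < 2 ^ p := Real.rpow_pos_of_pos (by norm_num) p
  have hdouble : ∀ x : ℝ, 0 < x → φ (2 * x) ≤ 2 ^ p * φ x := by
    intro x hx
    have h := hcover x (2 * x) hx (by linarith)
    have hφx := hφpos x hx
    have hφ2x := hφpos (2 * x) (by linarith)
    rw [div_le_div_iff₀ hφx hφ2x] at h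
    have h2 : (2 * x) ^ p = 2 ^ p * x ^ p := Real.mul_rpow (by norm_num) hx.le
    have hxp : (0:ℝ) < x ^ p := Real.rpow_pos_of_pos hx p
    nlinarith
  have hmono : MonotoneOn φ (Set.Ici 0) := hφm.monotoneOn
  have hlam0 := hlam.1
  have hsg0 := hsg.1
  have habs : 0 ≤ |r lam sg| := abs_nonneg _
  have hφl := hφpos lam hlam0
  have hφls : 0 ≤ φ (lam + sg) := by
    have : φ 0 ≤ φ (lam + sg) :=
      hmono Set.self_mem_Ici (Set.mem_Ici.mpr (by linarith)) (by linarith)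
    linarith [hφ0 ▸ this]
  rcases le_total sg lam with h | h
  · have h1 : φ (lam + sg) ≤ φ (2 * lam) :=
      hmono (Set.mem_Ici.mpr (by linarith)) (Set.mem_Ici.mpr (by linarith)) (by linarith)
    have h2 := hdouble lam hlam0
    have h3 := hγ lam hlam sg hsg
    have hγcp : γ ≤ cp := hcp ▸ le_max_left _ _
    nlinarith
  · have hsgpos : 0 < sg := lt_of_lt_of_le hlam0 h
    have h1 : φ (lam + sg) ≤ φ (2 * sg) :=
      hmono (Set.mem_Ici.mpr (by linarith)) (Set.mem_Ici.mpr (by linarith)) (by linarith)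
    have h2 := hdouble sg hsgpos
    have h3 := hqual lam hlam sg hsg
    have hφs := hφpos sg hsgpos
    nlinarith
end

section
/- Let G, H be bounded nonnegative self-adjoint operators on a Hilbert space H satisfying ‖G u‖ ≤ ‖H u‖ for all u ∈ H. Then for every exponent 0 < q ≤ 1, ‖G^q u‖ ≤ ‖H^q u‖ for all u ∈ H. -/
open scoped NNReal ENNReal

namespace HeinzAux

lemma sr_swap {A : Type*} [NormedRing A] [NormedAlgebra ℝ A] (u v : A) :
    spectralRadius ℝ (u * v) = spectralRadius ℝ (v * u) := by
  have key : ∀ x y : A, spectralRadius ℝ (x * y) ≤ spectralRadius ℝ (y * x) := by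
    intro x y
    rw [spectralRadius, spectralRadius]
    refine iSup₂_le fun k hk => ?_
    rcases eq_or_ne k 0 with rfl | hne
    · simp
    · have hk' : k ∈ spectrum ℝ (y * x) := by
        have : k ∈ spectrum ℝ (x * y) \ {0} := ⟨hk, hne⟩
        rw [spectrum.nonzero_mul_comm] at this
        exact this.1
      exact le_iSup₂ (f := fun (k : ℝ) (_ : k ∈ spectrum ℝ (y * x)) => (‖k‖₊ : ℝ≥0∞)) k hk'
  exact le_antisymm (key u v) (key v u)

variable {A : Type*} [CStarAlgebra A] [Nontrivial A] [PartialOrder A] [StarOrderedRing A]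

lemma isUnit_rpow {a : A} (ha : 0 ≤ a) (hau : IsUnit a) (x : ℝ) : IsUnit (a ^ x) :=
  ⟨⟨a ^ x, a ^ (-x), CFC.rpow_mul_rpow_neg x (hau.isStrictlyPositive ha),
    CFC.rpow_neg_mul_rpow x (hau.isStrictlyPositive ha)⟩, rfl⟩

lemma norm_criterion {a b : A} (ha : 0 ≤ a) (hb : 0 ≤ b) (hau : IsUnit a) (hbu : IsUnit b)
    {r : ℝ} (hr : 0 < r) :
    a ^ r ≤ b ^ r ↔ ‖a ^ (r / 2) * b ^ (-(r / 2))‖ ≤ 1 := by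
  have h0a := spectrum.zero_notMem ℝ≥0 hau
  have h0b := spectrum.zero_notMem ℝ≥0 hbu
  rw [le_iff_norm_sqrt_mul_rpow (a ^ r) (b ^ r) CFC.rpow_nonneg
      ((isUnit_rpow hb hbu r).isStrictlyPositive CFC.rpow_nonneg),
    CFC.sqrt_rpow hau hr.ne', CFC.rpow_rpow b r _ hr.ne' (hbu.isStrictlyPositive hb),
    show r * -(1 / 2) = -(r / 2) by ring]

lemma sa_rpow {a : A} (ha : 0 ≤ a) (x : ℝ) : star (a ^ x) = a ^ x :=
  (IsSelfAdjoint.of_nonneg (CFC.rpow_nonneg)).star_eq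

lemma norm_midpoint {a b : A} (ha : 0 ≤ a) (hb : 0 ≤ b) (hau : IsUnit a) (hbu : IsUnit b)
    {p q : ℝ}
    (hp : ‖a ^ (p / 2) * b ^ (-(p / 2))‖ ≤ 1) (hq : ‖a ^ (q / 2) * b ^ (-(q / 2))‖ ≤ 1) :
    ‖a ^ ((p + q) / 2 / 2) * b ^ (-((p + q) / 2 / 2))‖ ≤ 1 := by
  have h0a := spectrum.zero_notMem ℝ≥0 hau
  have h0b := spectrum.zero_notMem ℝ≥0 hbu
  set s : ℝ := (p + q) / 2 / 2 with hs
  set x := a ^ s * b ^ (-s) with hx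
  have hsx : star x = b ^ (-s) * a ^ s := by
    rw [hx, star_mul, sa_rpow ha, sa_rpow hb]
  -- the two splitting identities
  have hasplit : a ^ s * a ^ s = a ^ (p / 2) * a ^ (q / 2) := by
    rw [← CFC.rpow_add hau, ← CFC.rpow_add hau]
    congr 1
    rw [hs]; ring
  have hbsplit : b ^ (-s) * b ^ (-s) = b ^ (-(q / 2)) * b ^ (-(p / 2)) := by
    rw [← CFC.rpow_add hbu, ← CFC.rpow_add hbu]
    congr 1
    rw [hs]; ring
  have e1 : star x * x = b ^ (-s) * (a ^ s * (a ^ s * b ^ (-s))) := by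
    rw [hsx, hx]; noncomm_ring
  have e2 : a ^ s * (a ^ s * b ^ (-s)) * b ^ (-s)
      = a ^ (p / 2) * (a ^ (q / 2) * b ^ (-(q / 2)) * b ^ (-(p / 2))) := by
    calc a ^ s * (a ^ s * b ^ (-s)) * b ^ (-s)
        = (a ^ s * a ^ s) * (b ^ (-s) * b ^ (-s)) := by noncomm_ring
      _ = (a ^ (p / 2) * a ^ (q / 2)) * (b ^ (-(q / 2)) * b ^ (-(p / 2))) := by
          rw [hasplit, hbsplit]
      _ = a ^ (p / 2) * (a ^ (q / 2) * b ^ (-(q / 2)) * b ^ (-(p / 2))) := by noncomm_ring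
  set w := a ^ (q / 2) * b ^ (-(q / 2)) * b ^ (-(p / 2)) * a ^ (p / 2) with hw
  have hchain : ‖x‖ * ‖x‖ ≤ 1 := by
    have hsa : IsSelfAdjoint (star x * x) := IsSelfAdjoint.of_nonneg (star_mul_self_nonneg x)
    have h1 : ‖x‖ * ‖x‖ = (spectralRadius ℝ (star x * x)).toReal := by
      rw [hsa.toReal_spectralRadius_eq_norm, CStarRing.norm_star_mul_self]
    have h2 : spectralRadius ℝ (star x * x) = spectralRadius ℝ w := by
      rw [e1, sr_swap, e2, sr_swap, hw]
    have h3 : (spectralRadius ℝ w).toReal ≤ ‖w‖ := by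
      have := spectrum.spectralRadius_le_nnnorm (𝕜 := ℝ) w
      calc (spectralRadius ℝ w).toReal ≤ ((‖w‖₊ : ℝ≥0∞)).toReal :=
            ENNReal.toReal_mono (by simp) this
        _ = ‖w‖ := by simp
    have h4 : ‖w‖ ≤ ‖a ^ (q / 2) * b ^ (-(q / 2))‖ * ‖b ^ (-(p / 2)) * a ^ (p / 2)‖ := by
      calc ‖w‖ = ‖(a ^ (q / 2) * b ^ (-(q / 2))) * (b ^ (-(p / 2)) * a ^ (p / 2))‖ := by
            rw [hw]; noncomm_ring
        _ ≤ _ := norm_mul_le _ _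
    have h5 : ‖b ^ (-(p / 2)) * a ^ (p / 2)‖ = ‖a ^ (p / 2) * b ^ (-(p / 2))‖ := by
      rw [← norm_star (b ^ (-(p / 2)) * a ^ (p / 2)), star_mul, sa_rpow ha, sa_rpow hb]
    rw [h1, h2]
    refine h3.trans (h4.trans ?_)
    rw [h5]
    exact mul_le_one₀ hq (norm_nonneg _) hp
  nlinarith [norm_nonneg x, hchain]

end HeinzAux

namespace HeinzAux2
open HeinzAux

variable {A : Type*} [CStarAlgebra A] [Nontrivial A] [PartialOrder A] [StarOrderedRing A]

lemma crit_of_le {a b : A} (ha : 0 ≤ a) (hb : 0 ≤ b) (hau : IsUnit a) (hbu : IsUnit b)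
    {r : ℝ} (hr : 0 ≤ r) (h : a ^ r ≤ b ^ r) :
    ‖a ^ (r / 2) * b ^ (-(r / 2))‖ ≤ 1 := by
  rcases eq_or_lt_of_le hr with rfl | hr'
  · norm_num [CFC.rpow_zero a ha, CFC.rpow_zero b hb]
  · exact (norm_criterion ha hb hau hbu hr').mp h

lemma midpoint {a b : A} (ha : 0 ≤ a) (hb : 0 ≤ b) (hau : IsUnit a) (hbu : IsUnit b)
    {p q : ℝ} (hp0 : 0 ≤ p) (hq0 : 0 ≤ q)
    (hp : a ^ p ≤ b ^ p) (hq : a ^ q ≤ b ^ q) :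
    a ^ ((p + q) / 2) ≤ b ^ ((p + q) / 2) := by
  rcases eq_or_lt_of_le (by positivity : (0:ℝ) ≤ (p + q) / 2) with heq | hpos
  · rw [← heq, CFC.rpow_zero a ha, CFC.rpow_zero b hb]
  · exact (norm_criterion ha hb hau hbu hpos).mpr <|
      norm_midpoint ha hb hau hbu
        (crit_of_le ha hb hau hbu hp0 hp) (crit_of_le ha hb hau hbu hq0 hq)

lemma dyadic {a b : A} (ha : 0 ≤ a) (hb : 0 ≤ b) (hau : IsUnit a) (hbu : IsUnit b)
    (hab : a ≤ b) :
    ∀ n (k : ℕ), k ≤ 2 ^ n → a ^ ((k : ℝ) / (2:ℝ) ^ n) ≤ b ^ ((k : ℝ) / (2:ℝ) ^ n) := by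
  intro n
  induction n with
  | zero =>
    intro k hk
    interval_cases k
    · norm_num [CFC.rpow_zero a ha, CFC.rpow_zero b hb]
    · norm_num [CFC.rpow_one a ha, CFC.rpow_one b hb, hab]
  | succ n ih =>
    intro k hk
    rcases Nat.even_or_odd k with ⟨m, hm⟩ | ⟨m, hm⟩
    · subst hm
      have hm2 : m ≤ 2 ^ n := by
        have : (2:ℕ) ^ (n+1) = 2 ^ n + 2 ^ n := by ring
        omega
      have : ((m + m : ℕ) : ℝ) / (2:ℝ) ^ (n+1) = (m : ℝ) / (2:ℝ) ^ n := by
        push_cast; ring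
      rw [this]
      exact ih m hm2
    · subst hm
      have hm2 : m + 1 ≤ 2 ^ n := by
        have : (2:ℕ) ^ (n+1) = 2 ^ n + 2 ^ n := by ring
        omega
      have : ((2 * m + 1 : ℕ) : ℝ) / (2:ℝ) ^ (n+1)
          = ((m : ℝ) / (2:ℝ) ^ n + ((m + 1 : ℕ) : ℝ) / (2:ℝ) ^ n) / 2 := by
        push_cast; ring
      rw [this]
      exact midpoint ha hb hau hbu (by positivity) (by positivity)
        (ih m (by omega)) (ih (m+1) hm2)

end HeinzAux2

namespace HeinzAux3

-- |t^(q+d) - t^q| ≤ d * (1/q + M^3) for 0 ≤ t ≤ M, 1 ≤ M, 0 < q, 0 ≤ d ≤ 1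
lemma rpow_diff_bound {M q d t : ℝ} (hM : 1 ≤ M) (ht0 : 0 ≤ t) (htM : t ≤ M)
    (hq : 0 < q) (hq1 : q ≤ 1) (hd : 0 ≤ d) (hd1 : d ≤ 1) :
    |t ^ (q + d) - t ^ q| ≤ d * (1 / q + M ^ 3) := by
  have hC : 0 ≤ d * (1 / q + M ^ 3) := by positivity
  rcases eq_or_lt_of_le ht0 with rfl | ht
  · rw [Real.zero_rpow (by positivity : q + d ≠ 0), Real.zero_rpow hq.ne']
    simpa using hC
  have hsplit : t ^ (q + d) = t ^ q * t ^ d := Real.rpow_add ht q d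
  have htq : (0:ℝ) < t ^ q := Real.rpow_pos_of_pos ht q
  have htd : (0:ℝ) < t ^ d := Real.rpow_pos_of_pos ht d
  rcases le_or_gt t 1 with ht1 | ht1
  · -- 0 < t ≤ 1 : t^q - t^q * t^d ≤ d / q
    have hle : t ^ (q + d) ≤ t ^ q :=
      Real.rpow_le_rpow_of_exponent_ge ht ht1 (by linarith)
    rw [abs_of_nonpos (by linarith), neg_sub]
    have hlog : Real.log (t ^ d) ≤ t ^ d - 1 := Real.log_le_sub_one_of_pos htd
    have hlogt : Real.log (t ^ d) = d * Real.log t := Real.log_rpow ht d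
    -- 1 - t^d ≤ d * (-log t)
    have h1 : 1 - t ^ d ≤ d * (-Real.log t) := by
      rw [hlogt] at hlog; linarith
    -- t^q * (-log t) ≤ 1/q
    have h2 : t ^ q * (-Real.log t) ≤ 1 / q := by
      have hlog2 : Real.log (t ^ (-q)) ≤ t ^ (-q) - 1 :=
        Real.log_le_sub_one_of_pos (Real.rpow_pos_of_pos ht _)
      rw [Real.log_rpow ht] at hlog2
      have hmul : t ^ q * t ^ (-q) = 1 := by
        rw [← Real.rpow_add ht]; simp
      have : -Real.log t ≤ t ^ (-q) / q := by
        rw [le_div_iff₀ hq]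
        nlinarith
      calc t ^ q * (-Real.log t) ≤ t ^ q * (t ^ (-q) / q) := by
            apply mul_le_mul_of_nonneg_left this htq.le
        _ = 1 / q := by rw [div_eq_mul_inv, ← mul_assoc, hmul, one_mul, one_div]
    have hneglog : 0 ≤ -Real.log t := by
      simpa using Real.log_nonpos ht0 ht1
    calc t ^ q - t ^ (q + d) = t ^ q * (1 - t ^ d) := by rw [hsplit]; ring
      _ ≤ t ^ q * (d * (-Real.log t)) := mul_le_mul_of_nonneg_left h1 htq.le
      _ = d * (t ^ q * (-Real.log t)) := by ring
      _ ≤ d * (1 / q) := mul_le_mul_of_nonneg_left h2 hd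
      _ ≤ d * (1 / q + M ^ 3) := by
          have h3 : (0:ℝ) ≤ d * M ^ 3 := by positivity
          linarith
  · -- 1 < t ≤ M : t^q * t^d - t^q ≤ d * M^3
    have hge : t ^ q ≤ t ^ (q + d) :=
      Real.rpow_le_rpow_of_exponent_le ht1.le (by linarith)
    rw [abs_of_nonneg (by linarith)]
    -- t^d - 1 ≤ t^d * (d * log t)
    have hlog : Real.log ((t ^ d)⁻¹) ≤ (t ^ d)⁻¹ - 1 :=
      Real.log_le_sub_one_of_pos (by positivity)
    rw [Real.log_inv, Real.log_rpow ht] at hlog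
    have h1 : t ^ d - 1 ≤ t ^ d * (d * Real.log t) := by
      have h' := mul_le_mul_of_nonneg_left hlog htd.le
      rw [mul_sub, mul_inv_cancel₀ htd.ne'] at h'
      nlinarith
    have hlogM : Real.log t ≤ M := by
      calc Real.log t ≤ t - 1 := Real.log_le_sub_one_of_pos ht
        _ ≤ M := by linarith
    have htdM : t ^ d ≤ M := by
      calc t ^ d ≤ M ^ d := Real.rpow_le_rpow ht0 htM hd
        _ ≤ M ^ (1:ℝ) := Real.rpow_le_rpow_of_exponent_le hM hd1
        _ = M := Real.rpow_one M
    have htqM : t ^ q ≤ M := by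
      calc t ^ q ≤ M ^ q := Real.rpow_le_rpow ht0 htM hq.le
        _ ≤ M ^ (1:ℝ) := Real.rpow_le_rpow_of_exponent_le hM hq1
        _ = M := Real.rpow_one M
    have hlogt0 : 0 ≤ Real.log t := Real.log_nonneg ht1.le
    calc t ^ (q + d) - t ^ q = t ^ q * (t ^ d - 1) := by rw [hsplit]; ring
      _ ≤ t ^ q * (t ^ d * (d * Real.log t)) := mul_le_mul_of_nonneg_left h1 htq.le
      _ ≤ M * (M * (d * M)) := by
          apply mul_le_mul htqM _ (by positivity) (by linarith)
          apply mul_le_mul htdM _ (by positivity) (by linarith)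
          exact mul_le_mul_of_nonneg_left hlogM hd
      _ = d * M ^ 3 := by ring
      _ ≤ d * (1 / q + M ^ 3) := by
          have h4 : (0:ℝ) ≤ d * (1 / q) := by positivity
          linarith

end HeinzAux3

namespace HeinzAux4
open HeinzAux HeinzAux2 HeinzAux3 Filter

variable {A : Type*} [CStarAlgebra A] [PartialOrder A] [StarOrderedRing A]

lemma rpow_eq_cfc_real {a : A} (ha : 0 ≤ a) (y : ℝ) :
    a ^ y = cfc (fun t : ℝ => t ^ y) a := by
  rw [CFC.rpow_def, cfc_nnreal_eq_real ..]
  apply cfc_congr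
  intro t ht
  have ht0 : 0 ≤ t := spectrum_nonneg_of_nonneg ha ht
  simp only [NNReal.coe_rpow, Real.coe_toNNReal t ht0]

lemma contOn_rpow {y : ℝ} (hy : 0 < y) (s : Set ℝ) :
    ContinuousOn (fun t : ℝ => t ^ y) s := fun t _ =>
  (Real.continuousAt_rpow_const t y (Or.inr hy.le)).continuousWithinAt

variable [Nontrivial A]

lemma tendsto_rpow_exponent {a : A} (ha : 0 ≤ a) {q : ℝ} (hq : 0 < q) (hq1 : q ≤ 1)
    {r : ℕ → ℝ} (hrg : ∀ n, q ≤ r n) (hrl : ∀ n, r n ≤ 1)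
    (hrt : Tendsto r atTop (nhds q)) :
    Tendsto (fun n => a ^ (r n)) atTop (nhds (a ^ q)) := by
  set M := max 1 ‖a‖ with hM'
  have hM : 1 ≤ M := le_max_left _ _
  have hbound : ∀ n, ‖a ^ (r n) - a ^ q‖ ≤ (r n - q) * (1 / q + M ^ 3) := by
    intro n
    rw [rpow_eq_cfc_real ha (r n), rpow_eq_cfc_real ha q,
      ← cfc_sub _ _ a (contOn_rpow (hq.trans_le (hrg n)) _) (contOn_rpow hq _)]
    apply norm_cfc_le
    · have h1 : 0 ≤ r n - q := sub_nonneg.mpr (hrg n)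
      positivity
    · intro t ht
      have ht0 : 0 ≤ t := spectrum_nonneg_of_nonneg ha ht
      have htM : t ≤ M := by
        refine le_trans (le_trans (le_abs_self t) ?_) (le_max_right _ _)
        exact spectrum.norm_le_norm_of_mem ht
      have hd : 0 ≤ r n - q := sub_nonneg.mpr (hrg n)
      have hd1 : r n - q ≤ 1 := by have := hrl n; linarith
      have := rpow_diff_bound hM ht0 htM hq hq1 hd hd1
      rw [show q + (r n - q) = r n by ring] at this
      simpa [Real.norm_eq_abs] using this
  rw [tendsto_iff_norm_sub_tendsto_zero]
  apply squeeze_zero (fun n => norm_nonneg _) hbound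
  have : Tendsto (fun n => (r n - q) * (1 / q + M ^ 3)) atTop
      (nhds ((q - q) * (1 / q + M ^ 3))) := ((hrt.sub_const q).mul_const _)
  simpa using this

lemma LH_unit {a b : A} (ha : 0 ≤ a) (hab : a ≤ b) (hau : IsUnit a) (hbu : IsUnit b)
    {q : ℝ} (hq0 : 0 < q) (hq1 : q ≤ 1) : a ^ q ≤ b ^ q := by
  have hb : 0 ≤ b := ha.trans hab
  set r : ℕ → ℝ := fun n => (⌈q * 2 ^ n⌉₊ : ℝ) / (2:ℝ) ^ n with hr
  have h2n : ∀ n : ℕ, (0:ℝ) < 2 ^ n := fun n => by positivity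
  have hk : ∀ n, ⌈q * 2 ^ n⌉₊ ≤ 2 ^ n := by
    intro n
    rw [Nat.ceil_le]
    push_cast
    calc q * 2 ^ n ≤ 1 * 2 ^ n := mul_le_mul_of_nonneg_right hq1 (h2n n).le
      _ = 2 ^ n := one_mul _
  have hge : ∀ n, q ≤ r n := by
    intro n
    rw [hr]
    dsimp only
    rw [le_div_iff₀ (h2n n)]
    exact Nat.le_ceil _
  have hle1 : ∀ n, r n ≤ 1 := by
    intro n
    rw [hr]
    dsimp only
    rw [div_le_one (h2n n)]
    exact_mod_cast hk n
  have hub : ∀ n, r n ≤ q + (1 / 2) ^ n := by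
    intro n
    rw [hr]
    dsimp only
    rw [div_le_iff₀ (h2n n)]
    have h1 := (Nat.ceil_lt_add_one (by positivity : (0:ℝ) ≤ q * 2 ^ n)).le
    have h2 : ((1:ℝ) / 2) ^ n * 2 ^ n = 1 := by
      rw [← mul_pow]; norm_num
    calc (⌈q * 2 ^ n⌉₊ : ℝ) ≤ q * 2 ^ n + 1 := h1
      _ = (q + (1 / 2) ^ n) * 2 ^ n := by rw [add_mul, h2]
  have htend : Tendsto r atTop (nhds q) := by
    have h0 : Tendsto (fun n : ℕ => q + (1 / 2 : ℝ) ^ n) atTop (nhds (q + 0)) :=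
      tendsto_const_nhds.add (tendsto_pow_atTop_nhds_zero_of_lt_one (by norm_num) (by norm_num))
    rw [add_zero] at h0
    exact tendsto_of_tendsto_of_tendsto_of_le_of_le tendsto_const_nhds h0 hge hub
  have hgood : ∀ n, a ^ (r n) ≤ b ^ (r n) := fun n =>
    HeinzAux2.dyadic ha hb hau hbu hab n _ (hk n)
  exact le_of_tendsto_of_tendsto' (tendsto_rpow_exponent ha hq0 hq1 hge hle1 htend)
    (tendsto_rpow_exponent hb hq0 hq1 hge hle1 htend) hgood

end HeinzAux4

namespace HeinzAux5
open HeinzAux HeinzAux3 HeinzAux4 Filter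

variable {A : Type*} [CStarAlgebra A] [PartialOrder A] [StarOrderedRing A]

lemma algebraMap_real_nonneg {r : ℝ} (hr : 0 ≤ r) : 0 ≤ algebraMap ℝ A r := by
  have h : algebraMap ℝ A r
      = star (algebraMap ℝ A (Real.sqrt r)) * algebraMap ℝ A (Real.sqrt r) := by
    rw [← algebraMap_star_comm, star_trivial, ← map_mul, Real.mul_self_sqrt hr]
  rw [h]
  exact star_mul_self_nonneg _

lemma isUnit_shift {a : A} (ha : 0 ≤ a) {c : ℝ} (hc : 0 < c) :
    IsUnit (algebraMap ℝ A c + a) := by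
  rw [← spectrum.zero_notMem_iff ℝ]
  intro h0
  rw [← spectrum.singleton_add_eq] at h0
  obtain ⟨x, hx, t, ht, hxt⟩ := Set.mem_add.mp h0
  rw [Set.mem_singleton_iff] at hx
  subst hx
  have := spectrum_nonneg_of_nonneg ha ht
  linarith [hxt]

lemma real_rpow_add_le {t c q : ℝ} (ht : 0 ≤ t) (hc : 0 ≤ c) (hq0 : 0 ≤ q) (hq1 : q ≤ 1) :
    (t + c) ^ q ≤ t ^ q + c ^ q := by
  have key := NNReal.rpow_add_le_add_rpow t.toNNReal c.toNNReal hq0 hq1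
  have h1 : ((t.toNNReal + c.toNNReal) ^ q : ℝ≥0) = ((t + c) ^ q : ℝ) := by
    rw [NNReal.coe_rpow, NNReal.coe_add, Real.coe_toNNReal t ht, Real.coe_toNNReal c hc]
  have h2 : ((t.toNNReal ^ q + c.toNNReal ^ q : ℝ≥0) : ℝ) = t ^ q + c ^ q := by
    rw [NNReal.coe_add, NNReal.coe_rpow, NNReal.coe_rpow,
      Real.coe_toNNReal t ht, Real.coe_toNNReal c hc]
  calc (t + c) ^ q = ((t.toNNReal + c.toNNReal) ^ q : ℝ≥0) := h1.symm
    _ ≤ ((t.toNNReal ^ q + c.toNNReal ^ q : ℝ≥0) : ℝ) := by exact_mod_cast key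
    _ = t ^ q + c ^ q := h2

lemma shift_rpow_close [Nontrivial A] {a : A} (ha : 0 ≤ a) {c q : ℝ} (hc : 0 < c)
    (hq0 : 0 < q) (hq1 : q ≤ 1) :
    ‖(algebraMap ℝ A c + a) ^ q - a ^ q‖ ≤ c ^ q := by
  have hshift : cfc (fun t : ℝ => c + t) a = algebraMap ℝ A c + a := by
    rw [show (fun t : ℝ => c + t) = (fun t : ℝ => c + id t) from rfl, cfc_const_add c id a, cfc_id ℝ a]
  have hcomp : (algebraMap ℝ A c + a) ^ q = cfc (fun t : ℝ => (c + t) ^ q) a := by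
    rw [rpow_eq_cfc_real (add_nonneg (algebraMap_real_nonneg hc.le) ha), ← hshift,
      ← cfc_comp' (fun t : ℝ => t ^ q) (fun t : ℝ => c + t) a
        (contOn_rpow hq0 _) (by fun_prop)]
  rw [hcomp, rpow_eq_cfc_real ha,
    ← cfc_sub _ _ a (by exact (contOn_rpow hq0 Set.univ).comp (by fun_prop) (Set.mapsTo_univ _ _))
      (contOn_rpow hq0 _)]
  apply norm_cfc_le (by positivity)
  intro t ht
  have ht0 : 0 ≤ t := spectrum_nonneg_of_nonneg ha ht
  have h1 : t ^ q ≤ (c + t) ^ q := Real.rpow_le_rpow ht0 (by linarith) hq0.le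
  have h2 : (c + t) ^ q ≤ t ^ q + c ^ q := by
    rw [add_comm c t]; exact real_rpow_add_le ht0 hc.le hq0.le hq1
  rw [Real.norm_eq_abs, abs_of_nonneg (by linarith)]
  linarith

theorem loewner_heinz {a b : A} (ha : 0 ≤ a) (hab : a ≤ b) {q : ℝ}
    (hq0 : 0 < q) (hq1 : q ≤ 1) : a ^ q ≤ b ^ q := by
  rcases subsingleton_or_nontrivial A with hs | hnt
  · exact le_of_eq (Subsingleton.elim _ _)
  have hb : 0 ≤ b := ha.trans hab
  set c : ℕ → ℝ := fun n => 1 / (n + 1) with hc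
  have hcpos : ∀ n, 0 < c n := fun n => by positivity
  have hstep : ∀ n, (algebraMap ℝ A (c n) + a) ^ q ≤ (algebraMap ℝ A (c n) + b) ^ q := by
    intro n
    exact LH_unit (add_nonneg (algebraMap_real_nonneg (hcpos n).le) ha)
      (add_le_add_right hab _) (isUnit_shift ha (hcpos n)) (isUnit_shift hb (hcpos n)) hq0 hq1
  have hc0 : Tendsto c atTop (nhds 0) := tendsto_one_div_add_atTop_nhds_zero_nat
  have hcq : Tendsto (fun n => (c n) ^ q) atTop (nhds 0) := by
    have := hc0.rpow_const (Or.inr hq0.le)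
    rwa [Real.zero_rpow hq0.ne'] at this
  have hta : Tendsto (fun n => (algebraMap ℝ A (c n) + a) ^ q) atTop (nhds (a ^ q)) := by
    rw [tendsto_iff_norm_sub_tendsto_zero]
    exact squeeze_zero (fun n => norm_nonneg _)
      (fun n => shift_rpow_close ha (hcpos n) hq0 hq1) hcq
  have htb : Tendsto (fun n => (algebraMap ℝ A (c n) + b) ^ q) atTop (nhds (b ^ q)) := by
    rw [tendsto_iff_norm_sub_tendsto_zero]
    exact squeeze_zero (fun n => norm_nonneg _)
      (fun n => shift_rpow_close hb (hcpos n) hq0 hq1) hcq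
  exact le_of_tendsto_of_tendsto' hta htb hstep

end HeinzAux5

open scoped InnerProductSpace

/-- Heinz inequality: if `‖G u‖ ≤ ‖H u‖` for bounded nonnegative self-adjoint operators
`G, H`, then `‖G^q u‖ ≤ ‖H^q u‖` for every `0 < q ≤ 1`, the fractional powers being
given by the continuous functional calculus. -/
theorem stmt5 {E : Type*} [NormedAddCommGroup E] [InnerProductSpace ℂ E]
    [CompleteSpace E] (G H : E →L[ℂ] E) (hG : G.IsPositive) (hH : H.IsPositive)
    (hle : ∀ u : E, ‖G u‖ ≤ ‖H u‖) (q : ℝ) (hq0 : 0 < q) (hq1 : q ≤ 1) :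
    ∀ u : E, ‖cfc (fun t : ℝ => t ^ q) G u‖ ≤ ‖cfc (fun t : ℝ => t ^ q) H u‖ := by
  intro u
  set A0 := G * G with hA0def
  set B0 := H * H with hB0def
  have hGsa : IsSelfAdjoint G := hG.isSelfAdjoint
  have hHsa : IsSelfAdjoint H := hH.isSelfAdjoint
  have hGsym : (G : E →ₗ[ℂ] E).IsSymmetric :=
    (ContinuousLinearMap.isSelfAdjoint_iff_isSymmetric).mp hGsa
  have hHsym : (H : E →ₗ[ℂ] E).IsSymmetric :=
    (ContinuousLinearMap.isSelfAdjoint_iff_isSymmetric).mp hHsa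
  have hA0 : (0 : E →L[ℂ] E) ≤ A0 := by
    simpa [hGsa.star_eq, hA0def] using star_mul_self_nonneg G
  have hB0 : (0 : E →L[ℂ] E) ≤ B0 := by
    simpa [hHsa.star_eq, hB0def] using star_mul_self_nonneg H
  have hGnn : (0 : E →L[ℂ] E) ≤ G := (ContinuousLinearMap.nonneg_iff_isPositive G).mpr hG
  have hHnn : (0 : E →L[ℂ] E) ≤ H := (ContinuousLinearMap.nonneg_iff_isPositive H).mpr hH
  -- A0 ≤ B0
  have hsaA0 : IsSelfAdjoint A0 := by
    rw [IsSelfAdjoint, star_mul, hGsa.star_eq]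
  have hsaB0 : IsSelfAdjoint B0 := by
    rw [IsSelfAdjoint, star_mul, hHsa.star_eq]
  have hAB : A0 ≤ B0 := by
    rw [ContinuousLinearMap.le_def]
    refine ⟨(ContinuousLinearMap.isSelfAdjoint_iff_isSymmetric).mp (hsaB0.sub hsaA0), fun x => ?_⟩
    have h1 : RCLike.re ⟪A0 x, x⟫_ℂ = ‖G x‖ ^ 2 := by
      have hs : ⟪G (G x), x⟫_ℂ = ⟪G x, G x⟫_ℂ := hGsym (G x) x
      rw [hA0def, ContinuousLinearMap.mul_apply, hs, inner_self_eq_norm_sq]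
    have h2 : RCLike.re ⟪B0 x, x⟫_ℂ = ‖H x‖ ^ 2 := by
      have hs : ⟪H (H x), x⟫_ℂ = ⟪H x, H x⟫_ℂ := hHsym (H x) x
      rw [hB0def, ContinuousLinearMap.mul_apply, hs, inner_self_eq_norm_sq]
    have h3 : ‖G x‖ ^ 2 ≤ ‖H x‖ ^ 2 := by
      have := hle x
      nlinarith [norm_nonneg (G x)]
    show 0 ≤ ContinuousLinearMap.reApplyInnerSelf _ x
    rw [ContinuousLinearMap.reApplyInnerSelf_apply]
    rw [ContinuousLinearMap.sub_apply, inner_sub_left, map_sub]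
    rw [h1, h2] at *
    linarith
  have key : A0 ^ q ≤ B0 ^ q := HeinzAux5.loewner_heinz hA0 hAB hq0 hq1
  set X := cfc (fun t : ℝ => t ^ q) G with hXdef
  set Y := cfc (fun t : ℝ => t ^ q) H with hYdef
  have hXsa : IsSelfAdjoint X := cfc_predicate _ G
  have hYsa : IsSelfAdjoint Y := cfc_predicate _ H
  have hXsym : (X : E →ₗ[ℂ] E).IsSymmetric :=
    (ContinuousLinearMap.isSelfAdjoint_iff_isSymmetric).mp hXsa
  have hYsym : (Y : E →ₗ[ℂ] E).IsSymmetric :=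
    (ContinuousLinearMap.isSelfAdjoint_iff_isSymmetric).mp hYsa
  -- identify X * X with cfc of A0
  have sqcomp : ∀ (T : E →L[ℂ] E), IsSelfAdjoint T → (0 : E →L[ℂ] E) ≤ T →
      cfc (fun t : ℝ => t ^ q) T * cfc (fun t : ℝ => t ^ q) T
        = cfc (fun s : ℝ => s ^ q) (T * T) := by
    intro T hTsa hTnn
    rw [← cfc_mul _ _ T (HeinzAux4.contOn_rpow hq0 _) (HeinzAux4.contOn_rpow hq0 _)]
    have h2 : T * T = cfc (fun t : ℝ => t ^ 2) T := by
      rw [cfc_pow_id T 2 hTsa, sq]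
    rw [h2, ← cfc_comp' (fun s : ℝ => s ^ q) (fun t : ℝ => t ^ 2) T
      (HeinzAux4.contOn_rpow hq0 _) (by fun_prop) hTsa]
    apply cfc_congr
    intro t ht
    have ht0 : 0 ≤ t := spectrum_nonneg_of_nonneg hTnn ht
    show t ^ q * t ^ q = (t ^ 2) ^ q
    rw [← Real.rpow_natCast t 2, ← Real.rpow_mul ht0,
      show (2:ℕ) * q = q + q by push_cast; ring, Real.rpow_add' ht0 (by positivity)]
  have hXX : X * X = A0 ^ q := by
    rw [hXdef, sqcomp G hGsa hGnn, ← HeinzAux4.rpow_eq_cfc_real hA0 q]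
  have hYY : Y * Y = B0 ^ q := by
    rw [hYdef, sqcomp H hHsa hHnn, ← HeinzAux4.rpow_eq_cfc_real hB0 q]
  -- compare norms
  have hXu : ‖X u‖ ^ 2 = RCLike.re ⟪(A0 ^ q) u, u⟫_ℂ := by
    have hs : ⟪X (X u), u⟫_ℂ = ⟪X u, X u⟫_ℂ := hXsym (X u) u
    rw [← hXX, ContinuousLinearMap.mul_apply, hs, inner_self_eq_norm_sq]
  have hYu : ‖Y u‖ ^ 2 = RCLike.re ⟪(B0 ^ q) u, u⟫_ℂ := by
    have hs : ⟪Y (Y u), u⟫_ℂ = ⟪Y u, Y u⟫_ℂ := hYsym (Y u) u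
    rw [← hYY, ContinuousLinearMap.mul_apply, hs, inner_self_eq_norm_sq]
  have hposd := (ContinuousLinearMap.le_def _ _).mp key
  have h5 := hposd.2 u
  rw [ContinuousLinearMap.reApplyInnerSelf_apply, ContinuousLinearMap.sub_apply,
    inner_sub_left, map_sub] at h5
  have hsq : ‖X u‖ ^ 2 ≤ ‖Y u‖ ^ 2 := by rw [hXu, hYu]; linarith
  exact (pow_le_pow_iff_left₀ (norm_nonneg _) (norm_nonneg _) two_ne_zero).mp hsq
end

section
/- Let g_λ : [0, κ²] → ℝ be a regularization scheme satisfying sup_t |t g_λ(t)| ≤ D and sup_t |g_λ(t)| ≤ B/λ, and let ϱ be an index function with ϱ² sub-linear. Then for all λ ∈ (0,1], sup_{t ∈ [0,κ²]} ϱ(t+λ) (t+λ)^{1/2} |g_λ(t)| ≤ (B + D) ϱ(λ) λ^{-1/2}. -/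
theorem stmt14 (κ : ℝ) (hκ : 0 < κ) (g : ℝ → ℝ → ℝ) (B D : ℝ)
    (hD : ∀ lam ∈ Set.Ioc (0 : ℝ) 1, ∀ t ∈ Set.Icc (0 : ℝ) (κ ^ 2), |t * g lam t| ≤ D)
    (hB : ∀ lam ∈ Set.Ioc (0 : ℝ) 1, ∀ t ∈ Set.Icc (0 : ℝ) (κ ^ 2), |g lam t| ≤ B / lam)
    (ϱ : ℝ → ℝ) (hc : ContinuousOn ϱ (Set.Ici 0))
    (hm : StrictMonoOn ϱ (Set.Ici 0)) (h0 : ϱ 0 = 0)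
    (hsub : ∀ u v : ℝ, 0 < u → u ≤ v → u / ϱ u ^ 2 ≤ v / ϱ v ^ 2) :
    ∀ lam ∈ Set.Ioc (0 : ℝ) 1, ∀ t ∈ Set.Icc (0 : ℝ) (κ ^ 2),
      ϱ (t + lam) * (t + lam) ^ ((1 : ℝ) / 2) * |g lam t| ≤
        (B + D) * ϱ lam * lam ^ (-(1 : ℝ) / 2) := by
  intro lam hlam t ht
  have hlam0 : 0 < lam := hlam.1
  have ht0 : 0 ≤ t := ht.1
  have hs0 : 0 < t + lam := by linarith
  have hϱpos : ∀ x : ℝ, 0 < x → 0 < ϱ x := fun x hx => by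
    have := hm (Set.self_mem_Ici) (le_of_lt hx) hx
    rwa [h0] at this
  have hϱs : 0 < ϱ (t + lam) := hϱpos _ hs0
  have hϱl : 0 < ϱ lam := hϱpos _ hlam0
  have hsq : 0 < Real.sqrt (t + lam) := Real.sqrt_pos.mpr hs0
  have hsql : 0 < Real.sqrt lam := Real.sqrt_pos.mpr hlam0
  -- key: ϱ(s)/√s ≤ ϱ(λ)/√λ
  have h1 := hsub lam (t + lam) hlam0 (by linarith)
  have h1' : lam * ϱ (t + lam) ^ 2 ≤ (t + lam) * ϱ lam ^ 2 :=
    (div_le_div_iff₀ (pow_pos hϱl 2) (pow_pos hϱs 2)).mp h1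
  have h2 : ϱ (t + lam) ^ 2 / (t + lam) ≤ ϱ lam ^ 2 / lam := by
    rw [div_le_div_iff₀ hs0 hlam0]; nlinarith
  have hkey : ϱ (t + lam) / Real.sqrt (t + lam) ≤ ϱ lam / Real.sqrt lam := by
    have h3 := Real.sqrt_le_sqrt h2
    rwa [Real.sqrt_div (by positivity), Real.sqrt_div (by positivity),
      Real.sqrt_sq hϱs.le, Real.sqrt_sq hϱl.le] at h3
  -- (t+λ)|g| ≤ D + B
  have hgB : |g lam t| ≤ B / lam := hB lam hlam t ht
  have hgD : |t * g lam t| ≤ D := hD lam hlam t ht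
  have hlg : lam * |g lam t| ≤ B := by
    have := mul_le_mul_of_nonneg_left hgB hlam0.le
    rwa [mul_div_cancel₀ _ hlam0.ne'] at this
  have htg : t * |g lam t| ≤ D := by
    rwa [abs_mul, abs_of_nonneg ht0] at hgD
  have hsg : (t + lam) * |g lam t| ≤ B + D := by nlinarith
  have hrw : (t + lam) ^ ((1 : ℝ) / 2) = Real.sqrt (t + lam) :=
    (Real.sqrt_eq_rpow (t + lam)).symm
  have hrwl : lam ^ (-(1 : ℝ) / 2) = 1 / Real.sqrt lam := by
    rw [neg_div, Real.rpow_neg hlam0.le, ← Real.sqrt_eq_rpow, one_div]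
  rw [hrw, hrwl]
  have hLHS : ϱ (t + lam) * Real.sqrt (t + lam) * |g lam t|
      = (ϱ (t + lam) / Real.sqrt (t + lam)) * ((t + lam) * |g lam t|) := by
    rw [div_mul_eq_mul_div, eq_div_iff hsq.ne']
    have h4 : Real.sqrt (t + lam) * Real.sqrt (t + lam) = t + lam :=
      Real.mul_self_sqrt hs0.le
    linear_combination (ϱ (t + lam) * |g lam t|) * h4
  rw [hLHS]
  calc (ϱ (t + lam) / Real.sqrt (t + lam)) * ((t + lam) * |g lam t|)
      ≤ (ϱ lam / Real.sqrt lam) * (B + D) := by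
        apply mul_le_mul hkey hsg (by positivity)
        positivity
    _ = (B + D) * ϱ lam * (1 / Real.sqrt lam) := by ring
end
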